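/- Normalization and well-formedness of date-period addition: for every valid date D and every period P = (ny, nm, nd) ∈ ℤ³, the small-step rules for date-period addition terminate when started from D +P P; that is, there exists a unique valid date D' such that D +P P reduces in finitely many steps to D'. -/
import Mathlib


/-- A date is a triple of integers (year, month, day). -/
structure Date where
  y : ℤ
  m : ℤ
  d : ℤ

/-- A year is a leap year iff divisible by 4 and (not by 100, or by 400). -/
def isLeap (y : ℤ) : Prop :=
  y % 4 = 0 ∧ (y % 100 ≠ 0 ∨ y % 400 = 0)

/-- Number of days in month `m` of year `y`. -/
def nbdays (y m : ℤ) : ℤ :=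
  if m = 4 ∨ m = 6 ∨ m = 9 ∨ m = 11 then 30
  else if m = 2 then
    (if y % 4 = 0 ∧ (y % 100 ≠ 0 ∨ y % 400 = 0) then 29 else 28)
  else 31

/-- A date is valid iff `1 ≤ m ≤ 12` and `1 ≤ d ≤ nbdays y m`. -/
def Date.valid (D : Date) : Prop :=
  1 ≤ D.m ∧ D.m ≤ 12 ∧ 1 ≤ D.d ∧ D.d ≤ nbdays D.y D.m

/-- Month addition `(y, m, d) +m n`, with round-down of the day component. -/
def addMonths (D : Date) (n : ℤ) : Date :=
  ⟨D.y + (D.m - 1 + n) / 12,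
   1 + (D.m - 1 + n) % 12,
   min D.d (nbdays (D.y + (D.m - 1 + n) / 12) (1 + (D.m - 1 + n) % 12))⟩

/-- A configuration of the small-step day-addition machine:
either a pending addition `D +D n`, or a finished date. -/
inductive Conf where
  | pending (D : Date) (n : ℤ)
  | done (D : Date)

/-- Small-step rules for day addition `+D`. -/
inductive Step : Conf → Conf → Prop where
  | add_days {y m d n : ℤ}
      (h1 : 1 ≤ d + n) (h2 : d + n ≤ nbdays y m) :
      Step (Conf.pending ⟨y, m, d⟩ n) (Conf.done ⟨y, m, d + n⟩)
  | add_days_over {y m d n : ℤ}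
      (h : d + n > nbdays y m) :
      Step (Conf.pending ⟨y, m, d⟩ n)
        (Conf.pending (addMonths ⟨y, m, 1⟩ 1) (n - (nbdays y m - d) - 1))
  | add_days_under1 {y m d n : ℤ}
      (h1 : 1 < d) (h2 : d + n ≤ 0) :
      Step (Conf.pending ⟨y, m, d⟩ n) (Conf.pending ⟨y, m, 1⟩ (d - 1 + n))
  | add_days_under2 {y m n y' m' : ℤ}
      (h1 : 1 + n ≤ 0) (h2 : addMonths ⟨y, m, 1⟩ (-1) = ⟨y', m', 1⟩) :
      Step (Conf.pending ⟨y, m, 1⟩ n) (Conf.pending ⟨y', m', 1⟩ (n + nbdays y' m'))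

/-- Reduction in finitely many steps. -/
def Reduces : Conf → Conf → Prop := Relation.ReflTransGen Step

instance : Nonempty Date := ⟨⟨2000, 3, 1⟩⟩

/-- `addDays D n` is the unique valid normal form of `D +D n`
(when it exists; arbitrary otherwise). -/
noncomputable def addDays (D : Date) (n : ℤ) : Date :=
  Classical.epsilon fun D' : Date =>
    D'.valid ∧ Reduces (Conf.pending D n) (Conf.done D')

/-- Date-period addition `D +P (ny, nm, nd) = (D +m (12·ny + nm)) +D nd`. -/
noncomputable def addPeriod (D : Date) (P : ℤ × ℤ × ℤ) : Date :=
  addDays (addMonths D (12 * P.1 + P.2.1)) P.2.2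

/-- Lexicographic order on dates. -/
def Date.le (a b : Date) : Prop :=
  a.y < b.y ∨ (a.y = b.y ∧ a.m < b.m) ∨ (a.y = b.y ∧ a.m = b.m ∧ a.d ≤ b.d)

/-- Strict lexicographic order on dates. -/
def Date.lt (a b : Date) : Prop :=
  a.y < b.y ∨ (a.y = b.y ∧ a.m < b.m) ∨ (a.y = b.y ∧ a.m = b.m ∧ a.d < b.d)

/-- The epoch date: March 1, 2000. -/
def epoch : Date := ⟨2000, 3, 1⟩

/-- `toDelta D` is the unique integer `n` with `epoch +D n = D`
(when it exists; arbitrary otherwise). -/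
noncomputable def toDelta (D : Date) : ℤ :=
  Classical.epsilon fun n : ℤ => addDays epoch n = D

/-- **Normalization and well-formedness of date-period addition**: for every valid date
`D` and every period `(ny, nm, nd) ∈ ℤ³`, the small-step rules terminate when started
from `D +P (ny, nm, nd) = (D +m (12·ny + nm)) +D nd`: there is a unique valid date `D'`
to which the starting configuration reduces in finitely many steps. -/

lemma nbdays_ge (y m : ℤ) : 28 ≤ nbdays y m := by
  unfold nbdays; split_ifs <;> norm_num

lemma addMonths_day1 (y m k : ℤ) :
    (addMonths ⟨y, m, 1⟩ k).d = 1 ∧ 1 ≤ (addMonths ⟨y, m, 1⟩ k).m ∧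
      (addMonths ⟨y, m, 1⟩ k).m ≤ 12 := by
  unfold addMonths
  refine ⟨?_, ?_, ?_⟩
  · simp only
    exact min_eq_left (by linarith [nbdays_ge (y + (m - 1 + k) / 12) (1 + (m - 1 + k) % 12)])
  · simp only
    have := Int.emod_nonneg (m - 1 + k) (by norm_num : (12:ℤ) ≠ 0); linarith
  · simp only
    have := Int.emod_lt_of_pos (m - 1 + k) (by norm_num : (0:ℤ) < 12); linarith

lemma step_det {c a b : Conf} (h1 : Step c a) (h2 : Step c b) : a = b := by
  cases h1 with
  | add_days p1 p2 =>
    rename_i y m d n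
    cases h2 with
    | add_days q1 q2 => rfl
    | add_days_over q => omega
    | add_days_under1 q1 q2 => omega
    | add_days_under2 q1 q2 => omega
  | add_days_over p =>
    rename_i y m d n
    cases h2 with
    | add_days q1 q2 => omega
    | add_days_over q => rfl
    | add_days_under1 q1 q2 => exfalso; have := nbdays_ge y m; omega
    | add_days_under2 q1 q2 => exfalso; have := nbdays_ge y m; omega
  | add_days_under1 p1 p2 =>
    rename_i y m d n
    cases h2 with
    | add_days q1 q2 => omega
    | add_days_over q => exfalso; have := nbdays_ge y m; omega
    | add_days_under1 q1 q2 => rfl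
    | add_days_under2 q1 q2 => omega
  | add_days_under2 p1 p2 =>
    rename_i y m n y1 m1
    cases h2 with
    | add_days q1 q2 => omega
    | add_days_over q => exfalso; have := nbdays_ge y m; omega
    | add_days_under1 q1 q2 => omega
    | add_days_under2 q1 q2 =>
        rename_i y2 m2
        have h := p2.symm.trans q2
        injection h with e1 e2 e3
        subst e1; subst e2; rfl

lemma done_noStep {D : Date} {c : Conf} (h : Step (Conf.done D) c) : False := by
  cases h

lemma nf_unique {c : Conf} {D1 D2 : Date}
    (h1 : Reduces c (Conf.done D1)) (h2 : Reduces c (Conf.done D2)) : D1 = D2 := by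
  induction h1 using Relation.ReflTransGen.head_induction_on with
  | refl =>
    rcases (Relation.ReflTransGen.cases_head h2) with h | ⟨c', hs, _⟩
    · exact Conf.done.inj h
    · exact absurd hs done_noStep
  | head hs _ ih =>
    rcases (Relation.ReflTransGen.cases_head h2) with h | ⟨c', hs', hr'⟩
    · subst h; exact absurd hs done_noStep
    · have := step_det hs hs'; subst this; exact ih hr'

lemma terminates : ∀ (k : ℕ) (y m d n : ℤ), n.natAbs = k → 1 ≤ m → m ≤ 12 →
    1 ≤ d → d ≤ nbdays y m →
    ∃ D' : Date, D'.valid ∧ Reduces (Conf.pending ⟨y, m, d⟩ n) (Conf.done D') := by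
  intro k
  induction k using Nat.strong_induction_on with
  | _ k ih =>
    intro y m d n hk hm1 hm2 hd1 hd2
    by_cases hc1 : 1 ≤ d + n
    · by_cases hc2 : d + n ≤ nbdays y m
      · exact ⟨⟨y, m, d + n⟩, ⟨hm1, hm2, hc1, hc2⟩,
          Relation.ReflTransGen.single (Step.add_days hc1 hc2)⟩
      · push_neg at hc2
        obtain ⟨hAd, hAm1, hAm2⟩ := addMonths_day1 y m 1
        have hnb := nbdays_ge y m
        have hn'lt : (n - (nbdays y m - d) - 1).natAbs < k := by omega
        obtain ⟨D', hv, hr⟩ := ih _ hn'lt (addMonths ⟨y, m, 1⟩ 1).y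
          (addMonths ⟨y, m, 1⟩ 1).m (addMonths ⟨y, m, 1⟩ 1).d
          (n - (nbdays y m - d) - 1) rfl hAm1 hAm2 (by omega)
          (by rw [hAd]; exact le_trans (by norm_num) (nbdays_ge _ _))
        exact ⟨D', hv, Relation.ReflTransGen.head (Step.add_days_over hc2) hr⟩
    · push_neg at hc1
      have hc1' : d + n ≤ 0 := by omega
      by_cases hd : 1 < d
      · have hn2 : (d - 1 + n).natAbs < k := by omega
        obtain ⟨D', hv, hr⟩ := ih _ hn2 y m 1 (d - 1 + n) rfl hm1 hm2 le_rfl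
          (le_trans (by norm_num) (nbdays_ge y m))
        exact ⟨D', hv, Relation.ReflTransGen.head (Step.add_days_under1 hd hc1') hr⟩
      · have hd1' : d = 1 := by omega
        subst hd1'
        obtain ⟨hAd, hAm1, hAm2⟩ := addMonths_day1 y m (-1)
        have hAeq : addMonths ⟨y, m, 1⟩ (-1) =
            ⟨(addMonths ⟨y, m, 1⟩ (-1)).y, (addMonths ⟨y, m, 1⟩ (-1)).m, 1⟩ := by
          have h0 : addMonths ⟨y, m, 1⟩ (-1) = ⟨(addMonths ⟨y, m, 1⟩ (-1)).y,
              (addMonths ⟨y, m, 1⟩ (-1)).m, (addMonths ⟨y, m, 1⟩ (-1)).d⟩ := rfl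
          rw [hAd] at h0; exact h0
        have hstep : Step (Conf.pending ⟨y, m, 1⟩ n)
            (Conf.pending ⟨(addMonths ⟨y, m, 1⟩ (-1)).y, (addMonths ⟨y, m, 1⟩ (-1)).m, 1⟩
              (n + nbdays (addMonths ⟨y, m, 1⟩ (-1)).y (addMonths ⟨y, m, 1⟩ (-1)).m)) :=
          Step.add_days_under2 (by omega) hAeq
        have hnbA := nbdays_ge (addMonths ⟨y, m, 1⟩ (-1)).y (addMonths ⟨y, m, 1⟩ (-1)).m
        by_cases hpos : 0 ≤ n + nbdays (addMonths ⟨y, m, 1⟩ (-1)).y (addMonths ⟨y, m, 1⟩ (-1)).m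
        · refine ⟨⟨(addMonths ⟨y, m, 1⟩ (-1)).y, (addMonths ⟨y, m, 1⟩ (-1)).m,
              1 + (n + nbdays (addMonths ⟨y, m, 1⟩ (-1)).y (addMonths ⟨y, m, 1⟩ (-1)).m)⟩,
            ⟨hAm1, hAm2, by dsimp only; omega, by dsimp only; omega⟩,
            Relation.ReflTransGen.head hstep
              (Relation.ReflTransGen.single (Step.add_days (by omega) (by omega)))⟩
        · have hlt : (n + nbdays (addMonths ⟨y, m, 1⟩ (-1)).y
              (addMonths ⟨y, m, 1⟩ (-1)).m).natAbs < k := by omega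
          obtain ⟨D', hv, hr⟩ := ih _ hlt (addMonths ⟨y, m, 1⟩ (-1)).y
            (addMonths ⟨y, m, 1⟩ (-1)).m 1 _ rfl hAm1 hAm2 le_rfl
            (le_trans (by norm_num) (nbdays_ge _ _))
          exact ⟨D', hv, Relation.ReflTransGen.head hstep hr⟩

theorem datePeriod_normalization (D : Date) (hD : D.valid) (ny nm nd : ℤ) :
    ∃! D' : Date, D'.valid ∧
      Reduces (Conf.pending (addMonths D (12 * ny + nm)) nd) (Conf.done D') := by
  obtain ⟨hm1, hm2, hd1, hd2⟩ := hD
  set A := addMonths D (12 * ny + nm) with hA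
  have hAm1 : 1 ≤ A.m := by
    have := Int.emod_nonneg (D.m - 1 + (12 * ny + nm)) (by norm_num : (12:ℤ) ≠ 0)
    simp only [hA, addMonths]; linarith
  have hAm2 : A.m ≤ 12 := by
    have := Int.emod_lt_of_pos (D.m - 1 + (12 * ny + nm)) (by norm_num : (0:ℤ) < 12)
    simp only [hA, addMonths]; linarith
  have hAd1 : 1 ≤ A.d := by
    have := nbdays_ge (D.y + (D.m - 1 + (12 * ny + nm)) / 12)
      (1 + (D.m - 1 + (12 * ny + nm)) % 12)
    simp only [hA, addMonths, le_min_iff]; constructor <;> linarith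
  have hAd2 : A.d ≤ nbdays A.y A.m := by
    simp only [hA, addMonths]; exact min_le_right _ _
  obtain ⟨D', hv, hr⟩ := terminates nd.natAbs A.y A.m A.d nd rfl hAm1 hAm2 hAd1 hAd2
  exact ⟨D', ⟨hv, hr⟩, fun E hE => nf_unique hE.2 hr⟩
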